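/- A ring R is almost Armendariz if and only if, for every positive integer n, the ring T_n(R) of n×n upper triangular matrices over R is almost Armendariz. -/

import Mathlib

/-- An element `a` of a ring `R` is *strongly nilpotent* if every sequence
`a₀ = a`, `aₙ₊₁ ∈ aₙ R aₙ` is eventually zero. -/
def IsStronglyNilpotent {R : Type*} [Ring R] (a : R) : Prop :=
  ∀ s : ℕ → R, s 0 = a → (∀ n : ℕ, ∃ r : R, s (n + 1) = s n * r * s n) → ∃ n : ℕ, s n = 0

/-- The prime radical `P(R)` of a ring `R`: the intersection of all prime two-sided
ideals of `R`, equivalently the set of strongly nilpotent elements of `R`. -/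
def primeRadical (R : Type*) [Ring R] : Set R :=
  {a : R | IsStronglyNilpotent a}

/-- A ring `R` is *almost Armendariz* if whenever `f, g ∈ R[x]` satisfy `f g = 0`, every
product of a coefficient of `f` with a coefficient of `g` lies in the prime radical `P(R)`. -/
def IsAlmostArmendariz (R : Type*) [Ring R] : Prop :=
  ∀ f g : Polynomial R, f * g = 0 → ∀ i j : ℕ, f.coeff i * g.coeff j ∈ primeRadical R

/-- `T_n(R)`: the ring of `n × n` upper triangular matrices over `R`, as a subring of the
full matrix ring. -/
def upperTriangularSubring (R : Type*) [Ring R] (n : ℕ) :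
    Subring (Matrix (Fin n) (Fin n) R) where
  carrier := {M | ∀ i j : Fin n, j < i → M i j = 0}
  zero_mem' := fun _ _ _ => rfl
  one_mem' := fun _ _ h => Matrix.one_apply_ne (ne_of_gt h)
  add_mem' := fun ha hb i j h => by
    simp only [Matrix.add_apply, ha i j h, hb i j h, add_zero]
  neg_mem' := fun ha i j h => by
    simp only [Matrix.neg_apply, ha i j h, neg_zero]
  mul_mem' := fun {a b} ha hb i j h => by
    rw [Matrix.mul_apply]
    apply Finset.sum_eq_zero
    intro k _
    rcases le_or_gt k j with hk | hk
    · rw [ha i k (lt_of_le_of_lt hk h), zero_mul]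
    · rw [hb k j hk, mul_zero]

section Aux
variable {R : Type*} [Ring R]

lemma diag_mul {n : ℕ} {A B : Matrix (Fin n) (Fin n) R}
    (hA : ∀ i j : Fin n, j < i → A i j = 0)
    (hB : ∀ i j : Fin n, j < i → B i j = 0) (k : Fin n) :
    (A * B) k k = A k k * B k k := by
  rw [Matrix.mul_apply, Finset.sum_eq_single k]
  · intro j _ hj
    rcases lt_or_gt_of_ne hj with h | h
    · rw [hA k j h, zero_mul]
    · rw [hB j k h, mul_zero]
  · intro h; exact absurd (Finset.mem_univ k) h

lemma level_mul {n : ℕ} {A B : Matrix (Fin n) (Fin n) R} {a b : ℕ}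
    (hA : ∀ i j : Fin n, (j : ℕ) < i + a → A i j = 0)
    (hB : ∀ i j : Fin n, (j : ℕ) < i + b → B i j = 0) :
    ∀ i j : Fin n, (j : ℕ) < i + (a + b) → (A * B) i j = 0 := by
  intro i j h
  rw [Matrix.mul_apply]
  apply Finset.sum_eq_zero
  intro k _
  rcases lt_or_ge (k : ℕ) (i + a) with hk | hk
  · rw [hA i k hk, zero_mul]
  · rw [hB k j (by omega), mul_zero]

lemma coe_mul' {n : ℕ} (A B : upperTriangularSubring R n) :
    ((A * B : upperTriangularSubring R n) : Matrix (Fin n) (Fin n) R)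
      = (A : Matrix (Fin n) (Fin n) R) * (B : Matrix (Fin n) (Fin n) R) := rfl

lemma stronglyNilpotent_of_diag {n : ℕ} (M : upperTriangularSubring R n)
    (h : ∀ k : Fin n, IsStronglyNilpotent ((M : Matrix (Fin n) (Fin n) R) k k)) :
    IsStronglyNilpotent M := by
  intro s hs0 hrec
  choose r hr using hrec
  have htri : ∀ m, ∀ i j : Fin n, j < i → (s m : Matrix (Fin n) (Fin n) R) i j = 0 :=
    fun m => (s m).2
  have hrtri : ∀ m, ∀ i j : Fin n, j < i → ((r m : Matrix (Fin n) (Fin n) R)) i j = 0 :=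
    fun m => (r m).2
  have habtri : ∀ m, ∀ i j : Fin n, j < i →
      ((s m : Matrix (Fin n) (Fin n) R) * (r m : Matrix (Fin n) (Fin n) R)) i j = 0 :=
    fun m => (s m * r m).2
  have hr0 : ∀ m, ∀ i j : Fin n, (j : ℕ) < (i : ℕ) + 0 → (r m : Matrix (Fin n) (Fin n) R) i j = 0 :=
    fun m i j hij => hrtri m i j (Fin.lt_def.2 (by omega))
  have hrc : ∀ m, (s (m + 1) : Matrix (Fin n) (Fin n) R)
      = (s m : Matrix (Fin n) (Fin n) R) * (r m : Matrix (Fin n) (Fin n) R)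
        * (s m : Matrix (Fin n) (Fin n) R) := by
    intro m; rw [hr m]; rfl
  have hdrec : ∀ m (k : Fin n), (s (m + 1) : Matrix (Fin n) (Fin n) R) k k
      = (s m : Matrix (Fin n) (Fin n) R) k k * (r m : Matrix (Fin n) (Fin n) R) k k
        * (s m : Matrix (Fin n) (Fin n) R) k k := by
    intro m k
    rw [hrc m, diag_mul (habtri m) (htri m) k, diag_mul (htri m) (hrtri m) k]
  -- diagonal entries eventually zero, and zero persists
  have hdiag : ∀ k : Fin n, ∃ N, ∀ m, N ≤ m → (s m : Matrix (Fin n) (Fin n) R) k k = 0 := by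
    intro k
    obtain ⟨N, hN⟩ := h k (fun m => (s m : Matrix (Fin n) (Fin n) R) k k)
      (by show (s 0 : Matrix (Fin n) (Fin n) R) k k = _; rw [hs0])
      (fun m => ⟨(r m : Matrix (Fin n) (Fin n) R) k k, hdrec m k⟩)
    refine ⟨N, fun m hm => ?_⟩
    induction m with
    | zero => exact le_antisymm hm (Nat.zero_le N) ▸ hN
    | succ p ih =>
      rcases Nat.lt_or_ge N (p + 1) with h' | h'
      · have hp := ih (by omega)
        rw [hdrec p k, hp, zero_mul, zero_mul]
      · have : N = p + 1 := by omega
        exact this ▸ hN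
  choose Nk hNk using hdiag
  set N := Finset.univ.sup Nk with hNdef
  -- level climbing
  have hlevel : ∀ m, ∀ i j : Fin n, (j : ℕ) < (i : ℕ) + (m + 1) →
      (s (N + m) : Matrix (Fin n) (Fin n) R) i j = 0 := by
    intro m
    induction m with
    | zero =>
      intro i j hij
      rcases lt_or_eq_of_le (Nat.lt_succ_iff.mp (by omega : (j : ℕ) < (i : ℕ) + 1)) with h' | h'
      · exact htri N i j (Fin.lt_def.2 h')
      · have : j = i := Fin.ext h'
        subst this
        exact hNk j N (Finset.le_sup (Finset.mem_univ j))
    | succ p ih =>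
      have inner := level_mul (a := p + 1) (b := 0) ih (hr0 (N + p))
      have step := level_mul (a := p + 1 + 0) (b := p + 1) inner ih
      intro i j hij
      have he : N + (p + 1) = (N + p) + 1 := by omega
      rw [he, hrc (N + p)]
      exact step i j (by omega)
  refine ⟨N + n, ?_⟩
  have : (s (N + n) : Matrix (Fin n) (Fin n) R) = 0 := by
    ext i j
    exact hlevel n i j (by omega)
  exact Subtype.ext this

end Aux

section Aux2
variable {R : Type*} [Ring R]

/-- The `k`-th diagonal entry, as a ring hom on upper triangular matrices. -/
def diagHom {n : ℕ} (k : Fin n) : upperTriangularSubring R n →+* R where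
  toFun M := (M : Matrix (Fin n) (Fin n) R) k k
  map_one' := Matrix.one_apply_eq k
  map_mul' A B := diag_mul A.2 B.2 k
  map_zero' := rfl
  map_add' _ _ := rfl

lemma diagHom_apply {n : ℕ} (k : Fin n) (M : upperTriangularSubring R n) :
    diagHom k M = (M : Matrix (Fin n) (Fin n) R) k k := rfl

/-- The scalar embedding `R →+* T₁(R)`. -/
def scalarHom : R →+* upperTriangularSubring R 1 where
  toFun a := ⟨Matrix.diagonal (fun _ => a), fun i j h =>
    absurd (Subsingleton.elim i j ▸ h) (lt_irrefl j)⟩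
  map_one' := Subtype.ext (by simp [Matrix.diagonal_one])
  map_mul' a b := Subtype.ext (by
    show Matrix.diagonal _ = Matrix.diagonal _ * Matrix.diagonal _
    rw [Matrix.diagonal_mul_diagonal])
  map_zero' := Subtype.ext (by simp)
  map_add' a b := Subtype.ext (by simp [Matrix.diagonal_add])

lemma diagHom_scalarHom (a : R) : diagHom (0 : Fin 1) (scalarHom a) = a := by
  simp [diagHom_apply, scalarHom, Matrix.diagonal_apply_eq]

/-- Transfer of strong nilpotence along a hom pair. -/
lemma isStronglyNilpotent_of_hom {S : Type*} [Ring S] (φ : S →+* R) (ψ : R →+* S)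
    (hsec : ∀ x, φ (ψ x) = x) {a : R} (h : IsStronglyNilpotent (ψ a)) :
    IsStronglyNilpotent a := by
  intro s hs0 hrec
  obtain ⟨N, hN⟩ := h (fun m => ψ (s m)) (by show ψ (s 0) = ψ a; rw [hs0])
    (fun m => by
      obtain ⟨r, hr⟩ := hrec m
      exact ⟨ψ r, show ψ (s (m+1)) = ψ (s m) * ψ r * ψ (s m) by
        simp only [hr, map_mul]⟩)
  refine ⟨N, ?_⟩
  have := congrArg φ hN
  simpa [hsec] using this

end Aux2

/-- A ring `R` is almost Armendariz if and only if, for every positive integer `n`, the ring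
`T_n(R)` of `n × n` upper triangular matrices over `R` is almost Armendariz. -/
theorem almostArmendariz_iff_upperTriangular {R : Type*} [Ring R] :
    IsAlmostArmendariz R ↔
      ∀ n : ℕ, 0 < n → IsAlmostArmendariz (upperTriangularSubring R n) := by
  constructor
  · intro hR n _ F G hFG i j
    refine stronglyNilpotent_of_diag _ (fun k => ?_)
    have h1 : F.map (diagHom k) * G.map (diagHom k) = 0 := by
      rw [← Polynomial.map_mul, hFG, Polynomial.map_zero]
    have h2 := hR _ _ h1 i j
    have h3 : (((F.coeff i * G.coeff j : upperTriangularSubring R n) :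
        Matrix (Fin n) (Fin n) R) k k)
        = (F.map (diagHom k)).coeff i * (G.map (diagHom k)).coeff j := by
      rw [Polynomial.coeff_map, Polynomial.coeff_map, ← map_mul]; rfl
    rw [h3]
    exact h2
  · intro h f g hfg i j
    have h1 := h 1 one_pos (f.map scalarHom) (g.map scalarHom)
      (by rw [← Polynomial.map_mul, hfg, Polynomial.map_zero]) i j
    have h2 : (f.map (scalarHom (R := R))).coeff i * (g.map scalarHom).coeff j
        = scalarHom (f.coeff i * g.coeff j) := by
      rw [Polynomial.coeff_map, Polynomial.coeff_map, ← map_mul]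
    rw [h2] at h1
    exact isStronglyNilpotent_of_hom (diagHom 0) scalarHom diagHom_scalarHom h1
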